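/- For all S > 0 and T > 0, the mixed partial derivative ∂_S ∂_T ∂_U F(S,T,U) evaluated at U = 0 equals 2·(log C)'''(S+T); moreover ∂_S ∂_T ∂_U F_odd(S,T,U) evaluated at U = 0 equals 0, so the same identity holds with F replaced by F_even. -/

import Mathlib

open Real MeasureTheory Filter
open Topology

/-- `Σ = √(3α²/2 − 1/8)`. -/
noncomputable def Sg (α : ℝ) : ℝ := Real.sqrt (3 * α ^ 2 / 2 - 1 / 8)

/-- `C(T) = Σ·cosh(ΣT) + α·sinh(ΣT)`. -/
noncomputable def Cg (α : ℝ) (T : ℝ) : ℝ :=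
  Sg α * Real.cosh (Sg α * T) + α * Real.sinh (Sg α * T)

/-- `Ĉ(T) = 2αΣ·cosh(ΣT) + (α²+Σ²)·sinh(ΣT)`. -/
noncomputable def Chat (α : ℝ) (T : ℝ) : ℝ :=
  2 * α * Sg α * Real.cosh (Sg α * T) + (α ^ 2 + Sg α ^ 2) * Real.sinh (Sg α * T)

/-- The even part of the three-point generating function. -/
noncomputable def Feven (α : ℝ) (S T U : ℝ) : ℝ :=
  (1 / Sg α ^ 2) * (Cg α S ^ 2 * Cg α T ^ 2 * Cg α U ^ 2 * Cg α (S + T + U) ^ 2)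
    / (Cg α (S + T) ^ 2 * Cg α (T + U) ^ 2 * Cg α (U + S) ^ 2)

/-- The odd part of the three-point generating function. -/
noncomputable def Fodd (α : ℝ) (S T U : ℝ) : ℝ :=
  ((α ^ 2 - Sg α ^ 2) ^ 2 / Sg α ^ 2) *
    (Real.sinh (Sg α * S) ^ 2 * Real.sinh (Sg α * T) ^ 2 * Real.sinh (Sg α * U) ^ 2
      * Chat α (S + T + U) ^ 2)
    / (Cg α (S + T) ^ 2 * Cg α (T + U) ^ 2 * Cg α (U + S) ^ 2)

/-- `F = F_even + F_odd`. -/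
noncomputable def Fg (α : ℝ) (S T U : ℝ) : ℝ := Feven α S T U + Fodd α S T U

noncomputable def Cgd (α x : ℝ) : ℝ :=
  Sg α * (Sg α * Real.sinh (Sg α * x) + α * Real.cosh (Sg α * x))
noncomputable def Chatd (α x : ℝ) : ℝ :=
  Sg α * (2 * α * Sg α * Real.sinh (Sg α * x) + (α ^ 2 + Sg α ^ 2) * Real.cosh (Sg α * x))
noncomputable def Gg (α x : ℝ) : ℝ := Cgd α x / Cg α x
noncomputable def Gd (α x : ℝ) : ℝ := Sg α ^ 2 - Gg α x ^ 2

lemma hasDerivAt_cmul (c x : ℝ) : HasDerivAt (fun y : ℝ => c * y) c x := by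
  simpa using (hasDerivAt_id x).const_mul c

lemma hasDerivAt_Cg (α x : ℝ) : HasDerivAt (Cg α) (Cgd α x) x := by
  unfold Cg Cgd
  have h := ((hasDerivAt_cmul (Sg α) x).cosh.const_mul (Sg α)).add
    ((hasDerivAt_cmul (Sg α) x).sinh.const_mul α)
  refine h.congr_deriv ?_
  ring

lemma hasDerivAt_Cgd (α x : ℝ) : HasDerivAt (Cgd α) (Sg α ^ 2 * Cg α x) x := by
  unfold Cgd Cg
  have h := (((hasDerivAt_cmul (Sg α) x).sinh.const_mul (Sg α)).add
    ((hasDerivAt_cmul (Sg α) x).cosh.const_mul α)).const_mul (Sg α)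
  refine h.congr_deriv ?_
  ring

lemma hasDerivAt_Chat (α x : ℝ) : HasDerivAt (Chat α) (Chatd α x) x := by
  unfold Chat Chatd
  have h := ((hasDerivAt_cmul (Sg α) x).cosh.const_mul (2 * α * Sg α)).add
    ((hasDerivAt_cmul (Sg α) x).sinh.const_mul (α ^ 2 + Sg α ^ 2))
  refine h.congr_deriv ?_
  ring

lemma hasDerivAt_Cg_const_add (α c x : ℝ) :
    HasDerivAt (fun y => Cg α (c + y)) (Cgd α (c + x)) x := by
  exact ((hasDerivAt_Cg α (c + x)).comp x ((hasDerivAt_id x).const_add c)).congr_deriv (mul_one _)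

lemma hasDerivAt_Cg_add_const (α c x : ℝ) :
    HasDerivAt (fun y => Cg α (y + c)) (Cgd α (x + c)) x := by
  exact ((hasDerivAt_Cg α (x + c)).comp x ((hasDerivAt_id x).add_const c)).congr_deriv (mul_one _)

lemma hasDerivAt_Chat_const_add (α c x : ℝ) :
    HasDerivAt (fun y => Chat α (c + y)) (Chatd α (c + x)) x := by
  exact ((hasDerivAt_Chat α (c + x)).comp x ((hasDerivAt_id x).const_add c)).congr_deriv (mul_one _)

lemma Cg_zero (α : ℝ) : Cg α 0 = Sg α := by simp [Cg]
lemma Cgd_zero (α : ℝ) : Cgd α 0 = Sg α * α := by simp [Cgd]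

lemma hasDerivAt_Gg {α x : ℝ} (hx : Cg α x ≠ 0) : HasDerivAt (Gg α) (Gd α x) x := by
  have h := (hasDerivAt_Cgd α x).div (hasDerivAt_Cg α x) hx
  refine h.congr_deriv ?_
  unfold Gd Gg
  field_simp

lemma hasDerivAt_Gd {α x : ℝ} (hx : Cg α x ≠ 0) :
    HasDerivAt (Gd α) (-(2 * Gg α x * Gd α x)) x := by
  have h := ((hasDerivAt_Gg hx).pow 2).const_sub (Sg α ^ 2)
  refine h.congr_deriv ?_
  push_cast
  ring

lemma Sg_pos {α : ℝ} (h1 : 1 / (2 * Real.sqrt 3) < α) : 0 < Sg α := by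
  have h3 : (0:ℝ) < Real.sqrt 3 := Real.sqrt_pos.mpr (by norm_num)
  have hsq : Real.sqrt 3 ^ 2 = 3 := Real.sq_sqrt (by norm_num)
  have key : 1 < α * (2 * Real.sqrt 3) := (div_lt_iff₀ (by positivity)).mp h1
  have h12 : 1 < 12 * α ^ 2 := by nlinarith [sq_nonneg (α * (2 * Real.sqrt 3) - 1)]
  exact Real.sqrt_pos.mpr (by nlinarith)

lemma alpha_pos {α : ℝ} (h1 : 1 / (2 * Real.sqrt 3) < α) : 0 < α := by
  have h3 : (0:ℝ) < Real.sqrt 3 := Real.sqrt_pos.mpr (by norm_num)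
  exact lt_trans (by positivity) h1

lemma Cg_pos {α : ℝ} (hSg : 0 < Sg α) (hα : 0 < α) {x : ℝ} (hx : 0 ≤ x) : 0 < Cg α x := by
  have h1 : 0 < Real.cosh (Sg α * x) := Real.cosh_pos _
  have h2 : 0 ≤ Real.sinh (Sg α * x) := Real.sinh_nonneg_iff.mpr (by positivity)
  have := mul_pos hSg h1
  have := mul_nonneg hα.le h2
  unfold Cg; linarith

lemma denom_ne {α : ℝ} {S T : ℝ} (hS : Cg α S ≠ 0) (hT : Cg α T ≠ 0)
    (hST : Cg α (S + T) ≠ 0) :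
    Cg α (S + T) ^ 2 * Cg α (T + 0) ^ 2 * Cg α (0 + S) ^ 2 ≠ 0 := by
  simp only [add_zero, zero_add]
  positivity

lemma inner_even {α : ℝ} (S T : ℝ) (hSg : Sg α ≠ 0) (hS : Cg α S ≠ 0)
    (hT : Cg α T ≠ 0) (hST : Cg α (S + T) ≠ 0) :
    HasDerivAt (fun U => Feven α S T U)
      (2 * α + 2 * Gg α (S + T) - 2 * Gg α T - 2 * Gg α S) 0 := by
  have e1 := (hasDerivAt_Cg α 0).pow 2
  have e2 := (hasDerivAt_Cg_const_add α (S + T) 0).pow 2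
  have e3 := (hasDerivAt_Cg_const_add α T 0).pow 2
  have e4 := (hasDerivAt_Cg_add_const α S 0).pow 2
  have hn := ((e1.const_mul (Cg α S ^ 2 * Cg α T ^ 2)).mul e2).const_mul (1 / Sg α ^ 2)
  have hd := (e3.const_mul (Cg α (S + T) ^ 2)).mul e4
  have h := hn.div hd (denom_ne hS hT hST)
  refine h.congr_deriv ?_
  simp only [add_zero, zero_add, Cg_zero, Cgd_zero, pow_one, Nat.cast_ofNat, Gg, Pi.pow_apply, Pi.mul_apply]
  field_simp
  ring

lemma inner_odd {α : ℝ} (S T : ℝ) (hS : Cg α S ≠ 0)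
    (hT : Cg α T ≠ 0) (hST : Cg α (S + T) ≠ 0) :
    HasDerivAt (fun U => Fodd α S T U) 0 0 := by
  have e1 := ((hasDerivAt_cmul (Sg α) 0).sinh.pow 2)
  have e2 := (hasDerivAt_Chat_const_add α (S + T) 0).pow 2
  have e3 := (hasDerivAt_Cg_const_add α T 0).pow 2
  have e4 := (hasDerivAt_Cg_add_const α S 0).pow 2
  have hn := ((e1.const_mul (Real.sinh (Sg α * S) ^ 2 * Real.sinh (Sg α * T) ^ 2)).mul
    e2).const_mul ((α ^ 2 - Sg α ^ 2) ^ 2 / Sg α ^ 2)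
  have hd := (e3.const_mul (Cg α (S + T) ^ 2)).mul e4
  have h := hn.div hd (denom_ne hS hT hST)
  refine h.congr_deriv ?_
  simp

lemma inner_fg {α : ℝ} (S T : ℝ) (hSg : Sg α ≠ 0) (hS : Cg α S ≠ 0)
    (hT : Cg α T ≠ 0) (hST : Cg α (S + T) ≠ 0) :
    HasDerivAt (fun U => Feven α S T U + Fodd α S T U)
      (2 * α + 2 * Gg α (S + T) - 2 * Gg α T - 2 * Gg α S) 0 := by
  exact ((inner_even S T hSg hS hT hST).add (inner_odd S T hS hT hST)).congr_deriv (add_zero _)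

lemma step2_gen {α : ℝ} (hSg : 0 < Sg α) (hα : 0 < α) (F : ℝ → ℝ → ℝ) {S T : ℝ}
    (hS : 0 < S) (hT : 0 < T)
    (hF : ∀ T' : ℝ, 0 < T' → deriv (fun U' => F T' U') 0
      = 2 * α + 2 * Gg α (S + T') - 2 * Gg α T' - 2 * Gg α S) :
    deriv (fun T' => deriv (fun U' => F T' U') 0) T = 2 * Gd α (S + T) - 2 * Gd α T := by
  have heq : (fun T' => deriv (fun U' => F T' U') 0) =ᶠ[𝓝 T]
      (fun T' => 2 * α + 2 * Gg α (S + T') - 2 * Gg α T' - 2 * Gg α S) := by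
    filter_upwards [Ioi_mem_nhds hT] with T' hT' using hF T' hT'
  rw [heq.deriv_eq]
  have hST : Cg α (S + T) ≠ 0 := (Cg_pos hSg hα (by linarith)).ne'
  have hCT : Cg α T ≠ 0 := (Cg_pos hSg hα hT.le).ne'
  have hG1 : HasDerivAt (fun T' => Gg α (S + T')) (Gd α (S + T)) T := by
    exact ((hasDerivAt_Gg hST).comp T ((hasDerivAt_id T).const_add S)).congr_deriv (mul_one _)
  have h := (((hasDerivAt_const T (2 * α)).add (hG1.const_mul 2)).sub
    ((hasDerivAt_Gg hCT).const_mul 2)).sub_const (2 * Gg α S)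
  rw [show deriv (fun T' => 2 * α + 2 * Gg α (S + T') - 2 * Gg α T' - 2 * Gg α S) T = 0 + 2 * Gd α (S + T) - 2 * Gd α T from h.deriv]
  ring

lemma step2_odd_gen (F : ℝ → ℝ → ℝ) {T : ℝ} (hT : 0 < T)
    (hF : ∀ T' : ℝ, 0 < T' → deriv (fun U' => F T' U') 0 = 0) :
    deriv (fun T' => deriv (fun U' => F T' U') 0) T = 0 := by
  have heq : (fun T' => deriv (fun U' => F T' U') 0) =ᶠ[𝓝 T] (fun _ => (0:ℝ)) := by
    filter_upwards [Ioi_mem_nhds hT] with T' hT' using hF T' hT'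
  rw [heq.deriv_eq, deriv_const]

lemma step3_gen {α : ℝ} (hSg : 0 < Sg α) (hα : 0 < α) (F : ℝ → ℝ → ℝ) {S T : ℝ}
    (hS : 0 < S) (hT : 0 < T)
    (hF : ∀ S' : ℝ, 0 < S' → deriv (fun T' => F S' T') T
      = 2 * Gd α (S' + T) - 2 * Gd α T) :
    deriv (fun S' => deriv (fun T' => F S' T') T) S
      = 2 * -(2 * Gg α (S + T) * Gd α (S + T)) := by
  have heq : (fun S' => deriv (fun T' => F S' T') T) =ᶠ[𝓝 S]
      (fun S' => 2 * Gd α (S' + T) - 2 * Gd α T) := by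
    filter_upwards [Ioi_mem_nhds hS] with S' hS' using hF S' hS'
  rw [heq.deriv_eq]
  have hST : Cg α (S + T) ≠ 0 := (Cg_pos hSg hα (by linarith)).ne'
  have hGd : HasDerivAt (fun S' => Gd α (S' + T)) (-(2 * Gg α (S + T) * Gd α (S + T))) S := by
    exact ((hasDerivAt_Gd hST).comp S ((hasDerivAt_id S).add_const T)).congr_deriv (mul_one _)
  have h := (hGd.const_mul 2).sub_const (2 * Gd α T)
  rw [h.deriv]

lemma step3_odd_gen (F : ℝ → ℝ → ℝ) {S T : ℝ} (hS : 0 < S)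
    (hF : ∀ S' : ℝ, 0 < S' → deriv (fun T' => F S' T') T = 0) :
    deriv (fun S' => deriv (fun T' => F S' T') T) S = 0 := by
  have heq : (fun S' => deriv (fun T' => F S' T') T) =ᶠ[𝓝 S] (fun _ => (0:ℝ)) := by
    filter_upwards [Ioi_mem_nhds hS] with S' hS' using hF S' hS'
  rw [heq.deriv_eq, deriv_const]

lemma iter3 {α : ℝ} (hSg : 0 < Sg α) (hα : 0 < α) {z : ℝ} (hz : 0 < z) :
    iteratedDeriv 3 (fun x => Real.log (Cg α x)) z = -(2 * Gg α z * Gd α z) := by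
  have hpos : ∀ y : ℝ, 0 < y → Cg α y ≠ 0 := fun y hy => (Cg_pos hSg hα hy.le).ne'
  have e1 : ∀ y : ℝ, 0 < y → deriv (fun x => Real.log (Cg α x)) y = Gg α y := fun y hy =>
    ((hasDerivAt_Cg α y).log (hpos y hy)).deriv
  have e2 : ∀ y : ℝ, 0 < y → deriv (deriv (fun x => Real.log (Cg α x))) y = Gd α y := by
    intro y hy
    have heq : deriv (fun x => Real.log (Cg α x)) =ᶠ[𝓝 y] Gg α := by
      filter_upwards [Ioi_mem_nhds hy] with w hw using e1 w hw
    rw [heq.deriv_eq]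
    exact (hasDerivAt_Gg (hpos y hy)).deriv
  have h3 : iteratedDeriv 3 (fun x => Real.log (Cg α x))
      = deriv (deriv (deriv (fun x => Real.log (Cg α x)))) := by
    rw [show (3:ℕ) = 2 + 1 from rfl, iteratedDeriv_succ,
      show (2:ℕ) = 1 + 1 from rfl, iteratedDeriv_succ, iteratedDeriv_one]
  rw [h3]
  have heq2 : deriv (deriv (fun x => Real.log (Cg α x))) =ᶠ[𝓝 z] Gd α := by
    filter_upwards [Ioi_mem_nhds hz] with w hw using e2 w hw
  rw [heq2.deriv_eq]
  exact (hasDerivAt_Gd (hpos z hz)).deriv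

/-- For `S, T > 0`, `∂_S ∂_T ∂_U F(S,T,U)|_{U=0} = 2·(log C)'''(S+T)`; moreover the same
mixed partial of `F_odd` vanishes there, so the identity also holds for `F_even`. -/
theorem stmt7 (α : ℝ) (h1 : 1 / (2 * Real.sqrt 3) < α) (h2 : α < 1 / 2) :
    ∀ S T : ℝ, 0 < S → 0 < T →
      (deriv (fun S' => deriv (fun T' => deriv (fun U' => Fg α S' T' U') 0) T) S
          = 2 * iteratedDeriv 3 (fun x => Real.log (Cg α x)) (S + T)) ∧
      (deriv (fun S' => deriv (fun T' => deriv (fun U' => Fodd α S' T' U') 0) T) S = 0) ∧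
      (deriv (fun S' => deriv (fun T' => deriv (fun U' => Feven α S' T' U') 0) T) S
          = 2 * iteratedDeriv 3 (fun x => Real.log (Cg α x)) (S + T)) := by
  have hSg : 0 < Sg α := Sg_pos h1
  have hα : 0 < α := alpha_pos h1
  intro S T hS hT
  have hpos : ∀ y : ℝ, 0 < y → Cg α y ≠ 0 := fun y hy => (Cg_pos hSg hα hy.le).ne'
  have hFg : ∀ S' : ℝ, 0 < S' →
      deriv (fun T' => deriv (fun U' => Fg α S' T' U') 0) T
        = 2 * Gd α (S' + T) - 2 * Gd α T := by
    intro S' hS'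
    exact step2_gen hSg hα (fun T' U' => Fg α S' T' U') hS' hT
      (fun T' hT' => (inner_fg S' T' hSg.ne' (hpos S' hS') (hpos T' hT')
        (hpos _ (by linarith))).deriv)
  have hFe : ∀ S' : ℝ, 0 < S' →
      deriv (fun T' => deriv (fun U' => Feven α S' T' U') 0) T
        = 2 * Gd α (S' + T) - 2 * Gd α T := by
    intro S' hS'
    exact step2_gen hSg hα (fun T' U' => Feven α S' T' U') hS' hT
      (fun T' hT' => (inner_even S' T' hSg.ne' (hpos S' hS') (hpos T' hT')
        (hpos _ (by linarith))).deriv)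
  have hFo : ∀ S' : ℝ, 0 < S' →
      deriv (fun T' => deriv (fun U' => Fodd α S' T' U') 0) T = 0 := by
    intro S' hS'
    exact step2_odd_gen (fun T' U' => Fodd α S' T' U') hT
      (fun T' hT' => (inner_odd S' T' (hpos S' hS') (hpos T' hT')
        (hpos _ (by linarith))).deriv)
  refine ⟨?_, ?_, ?_⟩
  · rw [iter3 hSg hα (by linarith : (0:ℝ) < S + T)]
    exact step3_gen hSg hα (fun S' T' => deriv (fun U' => Fg α S' T' U') 0) hS hT hFg
  · exact step3_odd_gen (fun S' T' => deriv (fun U' => Fodd α S' T' U') 0) hS hFo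
  · rw [iter3 hSg hα (by linarith : (0:ℝ) < S + T)]
    exact step3_gen hSg hα (fun S' T' => deriv (fun U' => Feven α S' T' U') 0) hS hT hFe
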